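/- For all real numbers x, y with 0 < x ≤ 1 and 0 < y ≤ 1, one has x(log x − log y) − (x − y) ≥ g(y)(x − y)², where g(y) = (y − 1 − log y)/(y − 1)² for y ≠ 1 (with g(1) = 1/2 by continuity). -/

import Mathlib

/-- The function `g(y) = (y - 1 - log y)/(y - 1)²`, extended by continuity to `g(1) = 1/2`. -/
noncomputable def g (y : ℝ) : ℝ := if y = 1 then 1/2 else (y - 1 - Real.log y) / (y - 1)^2

lemma log_ge_one_sub_inv {u : ℝ} (hu : 0 < u) : 1 - 1/u ≤ Real.log u := by
  have h := Real.log_le_sub_one_of_pos (x := 1/u) (by positivity)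
  rw [Real.log_div one_ne_zero hu.ne', Real.log_one] at h
  linarith

/-- The function `2 log u - u + 1/u` is antitone on `(0,∞)`. -/
lemma f_anti : AntitoneOn (fun u : ℝ => 2 * Real.log u - u + 1/u) (Set.Ioi 0) := by
  have hderiv : ∀ x ∈ Set.Ioi (0:ℝ),
      HasDerivAt (fun u : ℝ => 2 * Real.log u - u + 1/u) (2 * x⁻¹ - 1 + (-(x^2)⁻¹)) x := by
    intro x hx
    have hx0 : x ≠ 0 := ne_of_gt hx
    have h1 : HasDerivAt (fun u : ℝ => 2 * Real.log u) (2 * x⁻¹) x :=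
      (Real.hasDerivAt_log hx0).const_mul 2
    have h2 : HasDerivAt (fun u : ℝ => u) 1 x := hasDerivAt_id x
    have h3 : HasDerivAt (fun u : ℝ => 1/u) (-(x^2)⁻¹) x := by
      simpa [one_div] using (hasDerivAt_inv hx0)
    exact (h1.sub h2).add h3
  apply antitoneOn_of_deriv_nonpos (convex_Ioi 0)
  · exact fun x hx => ((hderiv x hx).continuousAt).continuousWithinAt
  · intro x hx
    rw [interior_Ioi] at hx
    exact ((hderiv x hx).differentiableAt).differentiableWithinAt
  · intro x hx
    rw [interior_Ioi] at hx
    rw [(hderiv x hx).deriv]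
    have hx0 : (0:ℝ) < x := hx
    have h : (2 * x⁻¹ - 1 + (-(x^2)⁻¹)) = -((x⁻¹ - 1)^2) := by
      field_simp
      ring
    rw [h]
    exact neg_nonpos.mpr (sq_nonneg _)

lemma key1 {u : ℝ} (hu : 0 < u) (hu1 : u ≤ 1) : u^2 - 1 ≤ 2*u*Real.log u := by
  have h := f_anti (Set.mem_Ioi.2 hu) (Set.mem_Ioi.2 one_pos) hu1
  simp only [Real.log_one] at h
  have hu' : u ≠ 0 := ne_of_gt hu
  have h2 : u - 1/u ≤ 2 * Real.log u := by linarith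
  have := mul_le_mul_of_nonneg_left h2 hu.le
  calc u^2 - 1 = u * (u - 1/u) := by field_simp
    _ ≤ u * (2 * Real.log u) := this
    _ = 2*u*Real.log u := by ring

lemma key2 {u : ℝ} (hu : 1 ≤ u) : 2*u*Real.log u ≤ u^2 - 1 := by
  have h := f_anti (Set.mem_Ioi.2 one_pos) (Set.mem_Ioi.2 (lt_of_lt_of_le one_pos hu)) hu
  simp only [Real.log_one] at h
  have hu0 : (0:ℝ) < u := lt_of_lt_of_le one_pos hu
  have h2 : 2 * Real.log u ≤ u - 1/u := by linarith
  have := mul_le_mul_of_nonneg_left h2 hu0.le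
  calc 2*u*Real.log u = u * (2 * Real.log u) := by ring
    _ ≤ u * (u - 1/u) := this
    _ = u^2 - 1 := by field_simp

/-- The function `2u - (u+1) log u` is antitone on `(0,∞)`. -/
lemma psi_anti : AntitoneOn (fun u : ℝ => 2*u - (u+1) * Real.log u) (Set.Ioi 0) := by
  have hderiv : ∀ x ∈ Set.Ioi (0:ℝ),
      HasDerivAt (fun u : ℝ => 2*u - (u+1) * Real.log u)
        (2 - (1 * Real.log x + (x+1) * x⁻¹)) x := by
    intro x hx
    have hx0 : x ≠ 0 := ne_of_gt hx
    have h1 : HasDerivAt (fun u : ℝ => 2*u) 2 x := by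
      simpa using (hasDerivAt_id x).const_mul 2
    have h2 : HasDerivAt (fun u : ℝ => (u+1) * Real.log u)
        (1 * Real.log x + (x+1) * x⁻¹) x :=
      ((hasDerivAt_id x).add_const 1).mul (Real.hasDerivAt_log hx0)
    exact h1.sub h2
  apply antitoneOn_of_deriv_nonpos (convex_Ioi 0)
  · exact fun x hx => ((hderiv x hx).continuousAt).continuousWithinAt
  · intro x hx
    rw [interior_Ioi] at hx
    exact ((hderiv x hx).differentiableAt).differentiableWithinAt
  · intro x hx
    rw [interior_Ioi] at hx
    rw [(hderiv x hx).deriv]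
    have hx0 : (0:ℝ) < x := hx
    have hlog := log_ge_one_sub_inv hx0
    have hx' : (x+1) * x⁻¹ = 1 + 1/x := by field_simp
    rw [hx']
    have : 1/x = x⁻¹ := one_div x
    nlinarith [hlog]

lemma key3 {u : ℝ} (hu : 0 < u) (hu1 : u ≤ 1) : (u+1) * Real.log u ≤ 2*(u-1) := by
  have h := psi_anti (Set.mem_Ioi.2 hu) (Set.mem_Ioi.2 one_pos) hu1
  simp only [Real.log_one] at h
  linarith

/-- `u ↦ u (u-1-log u)/(u-1)²` is monotone on `(0,1)`. -/
lemma M_mono : MonotoneOn (fun u : ℝ => u * (u - 1 - Real.log u) / (u-1)^2) (Set.Ioo 0 1) := by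
  have hderiv : ∀ x ∈ Set.Ioo (0:ℝ) 1,
      HasDerivAt (fun u : ℝ => u * (u - 1 - Real.log u) / (u-1)^2)
        (((1 * (x - 1 - Real.log x) + x * (1 - x⁻¹)) * (x-1)^2
          - x * (x - 1 - Real.log x) * (2*(x-1))) / ((x-1)^2)^2) x := by
    intro x hx
    have hx0 : x ≠ 0 := ne_of_gt hx.1
    have hx1 : x - 1 ≠ 0 := by
      intro h; apply absurd hx.2; linarith [sub_eq_zero.mp h]
    have hN : HasDerivAt (fun u : ℝ => u * (u - 1 - Real.log u))
        (1 * (x - 1 - Real.log x) + x * (1 - x⁻¹)) x := by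
      have h1 : HasDerivAt (fun u : ℝ => u - 1 - Real.log u) (1 - x⁻¹) x :=
        ((hasDerivAt_id x).sub_const 1).sub (Real.hasDerivAt_log hx0)
      exact (hasDerivAt_id x).mul h1
    have hD : HasDerivAt (fun u : ℝ => (u-1)^2) (2*(x-1)) x := by
      have := ((hasDerivAt_id x).sub_const 1).fun_pow 2
      simpa [mul_comm] using this
    exact hN.div hD (pow_ne_zero 2 hx1)
  apply monotoneOn_of_deriv_nonneg (convex_Ioo 0 1)
  · exact fun x hx => ((hderiv x hx).continuousAt).continuousWithinAt
  · intro x hx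
    rw [interior_Ioo] at hx
    exact ((hderiv x hx).differentiableAt).differentiableWithinAt
  · intro x hx
    rw [interior_Ioo] at hx
    rw [(hderiv x hx).deriv]
    have hx0 : (0:ℝ) < x := hx.1
    have hx1 : x < 1 := hx.2
    apply div_nonneg _ (by positivity)
    have hk := key3 hx0 (le_of_lt hx1)
    have hxinv : x * (1 - x⁻¹) = x - 1 := by field_simp
    rw [hxinv]
    nlinarith [mul_nonneg (by linarith : (0:ℝ) ≤ 1-x)
      (by linarith [hk] : (0:ℝ) ≤ 2*(x-1) - (x+1)*Real.log x)]

lemma yg_le_half {y : ℝ} (hy0 : 0 < y) (hy1 : y ≤ 1) : y * g y ≤ 1/2 := by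
  rcases eq_or_lt_of_le hy1 with h1 | h1
  · rw [h1]; simp [g]
  · rw [g, if_neg (ne_of_lt h1), mul_div_assoc']
    rw [div_le_iff₀ (by nlinarith)]
    have hk := key1 hy0 hy1
    nlinarith
lemma half_le_tg {t : ℝ} (ht : 1 ≤ t) : 1/2 ≤ t * g t := by
  rcases eq_or_lt_of_le ht with h1 | h1
  · rw [← h1]; simp [g]
  · rw [g, if_neg (ne_of_gt h1), mul_div_assoc']
    rw [le_div_iff₀ (by nlinarith)]
    have hk := key2 ht
    nlinarith

lemma gmul {y t : ℝ} (hy0 : 0 < y) (hy1 : y ≤ 1) (hyt : y ≤ t) : y * g y ≤ t * g t := by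
  rcases le_or_gt 1 t with ht | ht
  · exact le_trans (yg_le_half hy0 hy1) (half_le_tg ht)
  · -- y ≤ t < 1
    have hy1' : y < 1 := lt_of_le_of_lt hyt ht
    have h := M_mono (Set.mem_Ioo.2 ⟨hy0, hy1'⟩) (Set.mem_Ioo.2 ⟨lt_of_lt_of_le hy0 hyt, ht⟩) hyt
    rw [g, if_neg (ne_of_lt hy1'), g, if_neg (ne_of_lt ht),
      mul_div_assoc', mul_div_assoc']
    exact h

theorem stmt0 (x y : ℝ) (hx0 : 0 < x) (hx1 : x ≤ 1) (hy0 : 0 < y) (hy1 : y ≤ 1) :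
    x * (Real.log x - Real.log y) - (x - y) ≥ g y * (x - y)^2 := by
  rcases eq_or_ne x y with rfl | hxy
  · simp
  · set t := y / x with ht_def
    have ht0 : 0 < t := div_pos hy0 hx0
    have hyx : y = t * x := (div_mul_cancel₀ y hx0.ne').symm
    have hyt : y ≤ t := by
      rw [hyx]
      calc t * x ≤ t * 1 := mul_le_mul_of_nonneg_left hx1 ht0.le
        _ = t := mul_one t
    have ht1 : t ≠ 1 := by
      intro h
      apply hxy
      rw [hyx, h, one_mul]
    have hkey := gmul hy0 hy1 hyt
    -- g t ≥ x * g y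
    have hgt : x * g y ≤ g t := by
      have h2 : t * (x * g y) ≤ t * g t := by
        calc t * (x * g y) = (t * x) * g y := by ring
          _ = y * g y := by rw [← hyx]
          _ ≤ t * g t := hkey
      exact le_of_mul_le_mul_left h2 ht0
    -- rewrite LHS
    have hlog : Real.log y = Real.log t + Real.log x := by
      rw [hyx, Real.log_mul (ne_of_gt ht0) (ne_of_gt hx0)]
    have hgtval : g t * (t-1)^2 = t - 1 - Real.log t := by
      rw [g, if_neg ht1]
      exact div_mul_cancel₀ _ (pow_ne_zero 2 (sub_ne_zero.2 ht1))
    have hLHS : x * (Real.log x - Real.log y) - (x - y) = x * (t - 1 - Real.log t) := by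
      rw [hlog, hyx]; ring
    have hRHS : (x - y)^2 = x^2 * (t-1)^2 := by
      rw [hyx]; ring
    rw [ge_iff_le, hLHS, hRHS, ← hgtval]
    calc g y * (x^2 * (t-1)^2) = (x * g y) * (x * (t-1)^2) := by ring
      _ ≤ g t * (x * (t-1)^2) := by
          apply mul_le_mul_of_nonneg_right hgt (by positivity)
      _ = x * (g t * (t-1)^2) := by ring
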